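/- Let p be a probability distribution on ℕ with finite mean m = ∑_{n≥0} n p(n), and let α ∈ (1,2] be such that ∑_{n≥0} n^α p(n) < ∞. Then there exists a constant C ≥ 0 such that for every integer x ≥ 1: x · ∑_{n=0}^∞ p(n) [ (x+n−1)^α − x^α ] ≤ α(m−1) x^α + C x. That is, for the Lyapunov function V(x) = x^α and the linear function φ(x) = x one has LV(x) ≤ α(m−1) V(x) + C φ(x) for all x ≥ 1. -/

import Mathlib

open Real

lemma tangent_le {α a b : ℝ} (hα : 1 < α) (ha : 0 ≤ a) (hb : 0 ≤ b) :
    a ^ α + α * a ^ (α - 1) * (b - a) ≤ b ^ α := by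
  rcases ha.eq_or_lt with rfl | ha'
  · rw [Real.zero_rpow (by linarith), Real.zero_rpow (by linarith)]
    simpa using Real.rpow_nonneg hb α
  · have hs : -1 ≤ (b - a) / a := by
      rw [le_div_iff₀ ha']; linarith
    have h := one_add_mul_self_le_rpow_one_add hs hα.le
    have h1 : 1 + (b - a) / a = b / a := by field_simp; ring
    rw [h1, Real.div_rpow hb ha'.le] at h
    have h2 : a ^ α * (1 + α * ((b - a) / a)) ≤ a ^ α * (b ^ α / a ^ α) :=
      mul_le_mul_of_nonneg_left h (Real.rpow_nonneg ha'.le α)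
    have ha0 : a ^ α ≠ 0 := ne_of_gt (Real.rpow_pos_of_pos ha' α)
    rw [mul_div_cancel₀ _ ha0] at h2
    have h3 : a ^ α * ((b - a) / a) = a ^ (α - 1) * (b - a) := by
      rw [eq_comm, show α - 1 = α + (-1) by ring, Real.rpow_add ha', Real.rpow_neg_one]
      field_simp
    calc a ^ α + α * a ^ (α - 1) * (b - a)
        = a ^ α * (1 + α * ((b - a) / a)) := by
          rw [mul_add, mul_one]
          congr 1
          linear_combination -α * h3
      _ ≤ b ^ α := h2

lemma rpow_subadd {β a b : ℝ} (hβ0 : 0 ≤ β) (hβ1 : β ≤ 1) (ha : 0 ≤ a) (hb : 0 ≤ b) :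
    (a + b) ^ β ≤ a ^ β + b ^ β := by
  have h := NNReal.rpow_add_le_add_rpow (a.toNNReal) (b.toNNReal) hβ0 hβ1
  rw [← Real.toNNReal_add ha hb] at h
  have h2 := NNReal.coe_le_coe.2 h
  push_cast [NNReal.coe_rpow, Real.coe_toNNReal _ (add_nonneg ha hb),
    Real.coe_toNNReal _ ha, Real.coe_toNNReal _ hb] at h2
  exact h2

lemma term_bound {α x : ℝ} (hα : 1 < α) (hα2 : α ≤ 2) (hx : 1 ≤ x) (n : ℕ) :
    (x + (n : ℝ) - 1) ^ α - x ^ α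
      ≤ α * x ^ (α - 1) * ((n : ℝ) - 1) + 2 * (1 + (n : ℝ) ^ α) := by
  have hx0 : (0:ℝ) < x := by linarith
  match n with
  | 0 =>
    -- (x-1)^α - x^α ≤ -α x^(α-1) + 2
    have ht := tangent_le hα (by linarith : (0:ℝ) ≤ x - 1) hx0.le
    rw [show x - (x - 1) = 1 by ring, mul_one] at ht
    -- x^(α-1) ≤ (x-1)^(α-1) + 1
    have hsa : x ^ (α - 1) ≤ (x - 1) ^ (α - 1) + 1 := by
      have := rpow_subadd (by linarith : (0:ℝ) ≤ α - 1) (by linarith)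
        (by linarith : (0:ℝ) ≤ x - 1) (zero_le_one)
      rw [Real.one_rpow] at this
      simpa using this
    have hαpos : (0:ℝ) < α := by linarith
    have h1 : α * x ^ (α - 1) ≤ α * ((x - 1) ^ (α - 1) + 1) :=
      mul_le_mul_of_nonneg_left hsa hαpos.le
    push_cast
    rw [Real.zero_rpow (by linarith : α ≠ 0),
      show x + 0 - 1 = x - 1 by ring]
    nlinarith [ht, h1]
  | 1 =>
    push_cast
    rw [Real.one_rpow, show x + 1 - 1 = x by ring]
    have hxp : (0:ℝ) ≤ x ^ (α - 1) := Real.rpow_nonneg hx0.le _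
    nlinarith [hxp]
  | (k+2) =>
    have hk0 : (0:ℝ) ≤ (k:ℝ) := Nat.cast_nonneg k
    push_cast
    rw [show x + ((k:ℝ) + 2) - 1 = x + ((k:ℝ) + 1) by ring,
      show (k:ℝ) + 2 - 1 = (k:ℝ) + 1 by ring]
    set h : ℝ := (k:ℝ) + 1 with hh
    have hh1 : (1:ℝ) ≤ h := by rw [hh]; linarith
    have hhpos : (0:ℝ) < h := by linarith
    have ht := tangent_le hα (by linarith : (0:ℝ) ≤ x + h) hx0.le
    rw [show x - (x + h) = -h by ring] at ht
    have key : (x + h) ^ α - x ^ α ≤ α * (x + h) ^ (α - 1) * h := by nlinarith [ht]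
    have hsa : (x + h) ^ (α - 1) ≤ x ^ (α - 1) + h ^ (α - 1) :=
      rpow_subadd (by linarith) (by linarith) hx0.le hhpos.le
    have hpow : h ^ (α - 1) * h = h ^ α := by
      have e := Real.rpow_add hhpos (α - 1) 1
      rw [Real.rpow_one] at e
      rw [← e]
      norm_num
    have hha : h ^ α ≤ ((k:ℝ)+2) ^ α :=
      Real.rpow_le_rpow hhpos.le (by rw [hh]; linarith) (by linarith)
    have hxp : (0:ℝ) ≤ x ^ (α - 1) := Real.rpow_nonneg hx0.le _
    have hhp : (0:ℝ) ≤ h ^ (α - 1) := Real.rpow_nonneg hhpos.le _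
    have hk2 : (0:ℝ) ≤ ((k:ℝ)+2) ^ α := Real.rpow_nonneg (by positivity) _
    have hhap : (0:ℝ) ≤ h ^ α := Real.rpow_nonneg hhpos.le _
    have step : α * (x + h) ^ (α - 1) * h ≤ α * x ^ (α - 1) * h + α * h ^ α := by
      have h2 := mul_le_mul_of_nonneg_right
        (mul_le_mul_of_nonneg_left hsa (by linarith : (0:ℝ) ≤ α)) hhpos.le
      nlinarith [hpow]
    have hαh : α * h ^ α ≤ 2 * ((k:ℝ)+2) ^ α := by nlinarith [hha, hhap]
    linarith [key, step, hαh]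

theorem galton_watson_drift_linear_error
    (p : ℕ → ℝ) (hp : ∀ n, 0 ≤ p n) (hp1 : ∑' n, p n = 1)
    (m : ℝ) (hm : m = ∑' n : ℕ, (n : ℝ) * p n)
    (α : ℝ) (hα : 1 < α) (hα2 : α ≤ 2)
    (hmom : Summable (fun n : ℕ => (n : ℝ) ^ α * p n)) :
    ∃ C : ℝ, 0 ≤ C ∧
      ∀ x : ℕ, 1 ≤ x →
        (x : ℝ) * ∑' n : ℕ, p n * (((x : ℝ) + (n : ℝ) - 1) ^ α - (x : ℝ) ^ α)
          ≤ α * (m - 1) * (x : ℝ) ^ α + C * (x : ℝ) := by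
  have hps : Summable p := by
    by_contra hc
    rw [tsum_eq_zero_of_not_summable hc] at hp1
    norm_num at hp1
  have hnp : Summable (fun n : ℕ => (n : ℝ) * p n) := by
    refine Summable.of_nonneg_of_le (f := fun n => p n + (n : ℝ) ^ α * p n)
      (fun n => mul_nonneg n.cast_nonneg (hp n)) (fun n => ?_) (hps.add hmom)
    rcases Nat.eq_zero_or_pos n with rfl | hn
    · simpa using add_nonneg (hp 0) (mul_nonneg (Real.rpow_nonneg le_rfl α) (hp 0))
    · have h1 : (1:ℝ) ≤ (n:ℝ) := by exact_mod_cast hn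
      have : (n:ℝ) ≤ (n:ℝ) ^ α := by
        calc (n:ℝ) = (n:ℝ) ^ (1:ℝ) := (Real.rpow_one _).symm
          _ ≤ (n:ℝ) ^ α := Real.rpow_le_rpow_of_exponent_le h1 hα.le
      nlinarith [hp n, this, mul_le_mul_of_nonneg_right this (hp n)]
  set M : ℝ := ∑' n : ℕ, (n : ℝ) ^ α * p n with hM
  have hM0 : 0 ≤ M :=
    tsum_nonneg fun n => mul_nonneg (Real.rpow_nonneg n.cast_nonneg α) (hp n)
  refine ⟨2 * (1 + M), by linarith, fun x hx => ?_⟩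
  have hX : (1:ℝ) ≤ (x:ℝ) := by exact_mod_cast hx
  have hX0 : (0:ℝ) < (x:ℝ) := by linarith
  set X : ℝ := (x:ℝ) with hXdef
  set f : ℕ → ℝ := fun n => p n * ((X + (n:ℝ) - 1) ^ α - X ^ α) with hf
  set g : ℕ → ℝ := fun n =>
    (α * X ^ (α - 1)) * ((n:ℝ) * p n) - (α * X ^ (α - 1)) * p n
      + (2 * p n + 2 * ((n:ℝ) ^ α * p n)) with hg
  have hfg : ∀ n, f n ≤ g n := by
    intro n
    have hb := term_bound hα hα2 hX n
    have := mul_le_mul_of_nonneg_left hb (hp n)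
    calc f n ≤ p n * (α * X ^ (α - 1) * ((n:ℝ) - 1) + 2 * (1 + (n:ℝ) ^ α)) := this
      _ = g n := by simp only [hg]; ring
  have hgs : Summable g :=
    (((hnp.mul_left _).sub (hps.mul_left _)).add ((hps.mul_left 2).add (hmom.mul_left 2)))
  have hfs : Summable f := by
    have hf' : Summable (fun n => f n + X ^ α * p n) := by
      apply Summable.of_nonneg_of_le (fun n => ?_) (fun n => ?_)
        (hgs.add (hps.mul_left (X ^ α)))
      · have : f n + X ^ α * p n = p n * (X + (n:ℝ) - 1) ^ α := by simp only [hf]; ring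
        rw [this]
        exact mul_nonneg (hp n) (Real.rpow_nonneg (by have hn0 : (0:ℝ) ≤ (n:ℝ) := n.cast_nonneg; linarith) α)
      · exact add_le_add_left (hfg n) _
    have : f = fun n => (f n + X ^ α * p n) - X ^ α * p n := by funext n; ring
    rw [this]
    exact hf'.sub (hps.mul_left _)
  have htsum : ∑' n, f n ≤ ∑' n, g n := Summable.tsum_le_tsum hfg hfs hgs
  have htg : ∑' n, g n = (α * X ^ (α - 1)) * m - (α * X ^ (α - 1)) + (2 + 2 * M) := by
    rw [hg, Summable.tsum_add (((hnp.mul_left _)).sub (hps.mul_left _))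
      ((hps.mul_left 2).add (hmom.mul_left 2)),
      Summable.tsum_sub (hnp.mul_left _) (hps.mul_left _),
      Summable.tsum_add (hps.mul_left 2) (hmom.mul_left 2),
      tsum_mul_left, tsum_mul_left, tsum_mul_left, tsum_mul_left, hp1, ← hm, ← hM]
    ring
  have hXpow : X * X ^ (α - 1) = X ^ α := by
    have e := Real.rpow_add hX0 1 (α - 1)
    rw [Real.rpow_one] at e
    rw [← e]
    norm_num
  calc X * ∑' n, f n ≤ X * ∑' n, g n := mul_le_mul_of_nonneg_left htsum (by linarith)
    _ = α * (m - 1) * X ^ α + (2 * (1 + M)) * X := by rw [htg, ← hXpow]; ring
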